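/- Exceptions inhabit corrupted types: for any type A, valuation ρ, finite set Δ of exception names, and ε ∈ Δ, the term raise ε belongs to ⟦{Δ}A⟧ρ. -/

import Mathlib

/-- Exception names (a countable set, taken to be ℕ; the fixed bijection φ
with ℕ is the identity). -/
abbrev ExnName := ℕ

/-- Terms of Fx extended with the daimon ✠ and the test construction `M; N`. -/
inductive Tm : Type
  | var : ℕ → Tm
  | lam : Tm → Tm
  | app : Tm → Tm → Tm
  | raise : ExnName → Tm
  | tryc : Tm → ExnName → Tm → Tm
  | zero : Tm
  | succ : Tm
  | natrec : Tm
  | nil : Tm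
  | cons : Tm
  | foldr : Tm
  | daimon : Tm
  | seq : Tm → Tm → Tm
  deriving DecidableEq

namespace Tm

/-- Shifting of de Bruijn indices ≥ k. -/
def lift : ℕ → Tm → Tm
  | k, var i => if i < k then var i else var (i + 1)
  | k, lam M => lam (lift (k + 1) M)
  | k, app M N => app (lift k M) (lift k N)
  | k, tryc M e N => tryc (lift k M) e (lift k N)
  | k, seq M N => seq (lift k M) (lift k N)
  | _, raise e => raise e
  | _, zero => zero
  | _, succ => succ
  | _, natrec => natrec
  | _, nil => nil
  | _, cons => cons
  | _, foldr => foldr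
  | _, daimon => daimon

/-- Capture-avoiding substitution `M[k := N]` (de Bruijn). -/
def subst : ℕ → Tm → Tm → Tm
  | k, N, var i => if i = k then N else if k < i then var (i - 1) else var i
  | k, N, lam M => lam (subst (k + 1) (lift 0 N) M)
  | k, N, app M P => app (subst k N M) (subst k N P)
  | k, N, tryc M e P => tryc (subst k N M) e (subst k N P)
  | k, N, seq M P => seq (subst k N M) (subst k N P)
  | _, _, raise e => raise e
  | _, _, zero => zero
  | _, _, succ => succ
  | _, _, natrec => natrec
  | _, _, nil => nil
  | _, _, cons => cons
  | _, _, foldr => foldr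
  | _, _, daimon => daimon

end Tm

open Tm

/-- Regular values of Fx. -/
inductive RegVal : Tm → Prop
  | lam (M) : RegVal (lam M)
  | zero : RegVal zero
  | succ : RegVal succ
  | succApp (N) : RegVal (app succ N)
  | natrec : RegVal natrec
  | natrec1 (M) : RegVal (app natrec M)
  | natrec2 (M N) : RegVal (app (app natrec M) N)
  | nil : RegVal nil
  | cons : RegVal cons
  | cons1 (M) : RegVal (app cons M)
  | cons2 (M N) : RegVal (app (app cons M) N)
  | foldr : RegVal foldr
  | foldr1 (M) : RegVal (app foldr M)
  | foldr2 (M N) : RegVal (app (app foldr M) N)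

/-- Values: regular values, exceptions and the daimon. -/
def IsVal (V : Tm) : Prop := RegVal V ∨ (∃ e, V = raise e) ∨ V = daimon

/-- The notion of reduction ▷ of Fx extended with the daimon rules. -/
inductive Head : Tm → Tm → Prop
  | beta (M N) : Head (app (lam M) N) (subst 0 N M)
  | raiseApp (e M) : Head (app (raise e) M) (raise e)
  | tryCatch (e N) : Head (tryc (raise e) e N) N
  | tryOther (e e' N) : e ≠ e' → Head (tryc (raise e') e N) (raise e')
  | tryVal (V e N) : RegVal V → Head (tryc V e N) V
  | recZero (X Y) : Head (app (app (app natrec X) Y) zero) X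
  | recSucc (X Y N) :
      Head (app (app (app natrec X) Y) (app succ N))
        (app (app Y N) (app (app (app natrec X) Y) N))
  | recRaise (X Y e) : Head (app (app (app natrec X) Y) (raise e)) (raise e)
  | foldNil (X Y) : Head (app (app (app foldr X) Y) nil) X
  | foldCons (X Y E L) :
      Head (app (app (app foldr X) Y) (app (app cons E) L))
        (app (app (app Y E) L) (app (app (app foldr X) Y) L))
  | foldRaise (X Y e) : Head (app (app (app foldr X) Y) (raise e)) (raise e)
  | daimonApp (N) : Head (app daimon N) daimon
  | tryDaimon (e N) : Head (tryc daimon e N) daimon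
  | recDaimon (X Y) : Head (app (app (app natrec X) Y) daimon) daimon
  | foldDaimon (X Y) : Head (app (app (app foldr X) Y) daimon) daimon
  | seqDaimon (N) : Head (seq daimon N) N

/-- One-step reduction: compatible closure of ▷. -/
inductive Red : Tm → Tm → Prop
  | head {M N} : Head M N → Red M N
  | appL {M M' N} : Red M M' → Red (app M N) (app M' N)
  | appR {M N N'} : Red N N' → Red (app M N) (app M N')
  | lam {M M'} : Red M M' → Red (lam M) (lam M')
  | tryL {M M' e N} : Red M M' → Red (tryc M e N) (tryc M' e N)
  | tryR {M e N N'} : Red N N' → Red (tryc M e N) (tryc M e N')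
  | seqL {M M' N} : Red M M' → Red (seq M N) (seq M' N)
  | seqR {M N N'} : Red N N' → Red (seq M N) (seq M N')

/-- Many-step reduction. -/
abbrev RedStar : Tm → Tm → Prop := Relation.ReflTransGen Red

/-- Evaluation contexts of Fx. -/
inductive Ctx : Type
  | hole : Ctx
  | appl : Ctx → Tm → Ctx
  | tryd : Ctx → ExnName → Ctx
  | recd : Tm → Tm → Ctx → Ctx
  | foldd : Tm → Tm → Ctx → Ctx

namespace Ctx

/-- Filling the hole of a context with a term. -/
def fill : Ctx → Tm → Tm
  | hole, M => M
  | appl C N, M => Tm.app (fill C M) N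
  | tryd C e, M => Tm.tryc (fill C M) e Tm.daimon
  | recd X Y C, M => Tm.app (Tm.app (Tm.app Tm.natrec X) Y) (fill C M)
  | foldd X Y C, M => Tm.app (Tm.app (Tm.app Tm.foldr X) Y) (fill C M)

/-- Composition of contexts: `(C.comp D)[M] = C[D[M]]`. -/
def comp : Ctx → Ctx → Ctx
  | hole, D => D
  | appl C N, D => appl (comp C D) N
  | tryd C e, D => tryd (comp C D) e
  | recd X Y C, D => recd X Y (comp C D)
  | foldd X Y C, D => foldd X Y (comp C D)

end Ctx

/-- Orthogonality: `M ⊥ C` iff `C[M] →* ✠`. -/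
def Perp (M : Tm) (C : Ctx) : Prop := RedStar (C.fill M) Tm.daimon

/-- The orthogonal of a set of contexts. -/
def orth (S : Set Ctx) : Set Tm := { M | ∀ C ∈ S, Perp M C }

/-- `tryCtx Δ` is the context `try (… (try □ with ε₁ ↦ ✠) …) with εₙ ↦ ✠`,
for `Δ = {ε₁, …, εₙ}` enumerated in the order given by the fixed bijection
with ℕ (ε₁ innermost); it is the empty context when `Δ = ∅`. -/
def tryCtx (Δ : Finset ExnName) : Ctx := (Δ.sort (· ≤ ·)).foldl Ctx.tryd Ctx.hole

/-- `lift_Δ(S)`: wrap each context of `S` inside the `try_Δ` handlers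
(the handlers outermost). -/
def liftS (Δ : Finset ExnName) (S : Set Ctx) : Set Ctx :=
  (fun C => (tryCtx Δ).comp C) '' S

/-- `unlift_Δ(S)`: plug the `try_Δ` handlers inside each context of `S`. -/
def unliftS (Δ : Finset ExnName) (S : Set Ctx) : Set Ctx :=
  (fun C => C.comp (tryCtx Δ)) '' S

/-- Types of Fx; `union A Δ` is `A∪{Δ}`, `corrupt Δ A` is `{Δ}A`. -/
inductive Ty : Type
  | tvar : ℕ → Ty
  | nat : Ty
  | list : Ty → Ty
  | arrow : Ty → Ty → Ty
  | all : Ty → Ty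
  | union : Ty → Finset ExnName → Ty
  | corrupt : Finset ExnName → Ty → Ty
  deriving DecidableEq

/-- Extension of a valuation by a set of contexts for the bound type
variable 0 (de Bruijn). -/
def consVal (S : Set Ctx) (ρ : ℕ → Set Ctx) : ℕ → Set Ctx
  | 0 => S
  | i + 1 => ρ i

/-- The context interpretation `⟪A⟫ρ` of a type. -/
def CtxI : Ty → (ℕ → Set Ctx) → Set Ctx
  | .tvar i, ρ => ρ i
  | .nat, _ => {Ctx.recd Tm.daimon (Tm.lam (Tm.lam (Tm.var 0))) Ctx.hole}
  | .list A, ρ =>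
      (fun C => Ctx.foldd Tm.daimon
        (Tm.lam (Tm.lam (Tm.lam (Tm.seq (Ctx.fill C (Tm.var 2)) (Tm.var 0)))))
        Ctx.hole) '' CtxI A ρ
  | .arrow A B, ρ =>
      ⋃ (Δ : Finset ExnName),
        ⋃ N ∈ orth (liftS Δ (CtxI A ρ)), ⋃ C ∈ liftS Δ (CtxI B ρ),
          {Ctx.comp C (Ctx.appl Ctx.hole N)}
  | .all A, ρ => ⋃ (S : Set Ctx), ⋃ (_ : S.Nonempty), CtxI A (consVal S ρ)
  | .union A Δ, ρ => unliftS Δ (CtxI A ρ)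
  | .corrupt Δ A, ρ => liftS Δ (CtxI A ρ)

/-- The term interpretation `⟦A⟧ρ = ⟪A⟫ρ^⊥`. -/
def TmI (A : Ty) (ρ : ℕ → Set Ctx) : Set Tm := orth (CtxI A ρ)

lemma fill_red {M N : Tm} (C : Ctx) (h : Red M N) :
    Red (C.fill M) (C.fill N) := by
  induction C with
  | hole => exact h
  | appl C t ih => exact Red.appL ih
  | tryd C e ih => exact Red.tryL ih
  | recd X Y C ih => exact Red.appR ih
  | foldd X Y C ih => exact Red.appR ih

lemma fill_star {M N : Tm} (C : Ctx) (h : RedStar M N) :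
    RedStar (C.fill M) (C.fill N) :=
  Relation.ReflTransGen.lift C.fill (fun _ _ h => fill_red C h) _ _ h

lemma fill_comp (C D : Ctx) (M : Tm) :
    (C.comp D).fill M = C.fill (D.fill M) := by
  induction C with
  | hole => rfl
  | appl C t ih => simp [Ctx.comp, Ctx.fill, ih]
  | tryd C e ih => simp [Ctx.comp, Ctx.fill, ih]
  | recd X Y C ih => simp [Ctx.comp, Ctx.fill, ih]
  | foldd X Y C ih => simp [Ctx.comp, Ctx.fill, ih]

lemma ctx_raise (D : Ctx) (ε : ExnName) :
    RedStar (D.fill (Tm.raise ε)) (Tm.raise ε) ∨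
    RedStar (D.fill (Tm.raise ε)) Tm.daimon := by
  induction D with
  | hole => exact Or.inl .refl
  | appl D N ih =>
    rcases ih with h | h
    · exact Or.inl (((fill_star (Ctx.appl Ctx.hole N) h)).trans
        (Relation.ReflTransGen.single (Red.head (Head.raiseApp ε N))))
    · exact Or.inr (((fill_star (Ctx.appl Ctx.hole N) h)).trans
        (Relation.ReflTransGen.single (Red.head (Head.daimonApp N))))
  | tryd D e ih =>
    rcases ih with h | h
    · have h' := fill_star (Ctx.tryd Ctx.hole e) h
      by_cases he : e = ε
      · subst he
        exact Or.inr (h'.trans (Relation.ReflTransGen.single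
          (Red.head (Head.tryCatch e Tm.daimon))))
      · exact Or.inl (h'.trans (Relation.ReflTransGen.single
          (Red.head (Head.tryOther e ε Tm.daimon he))))
    · exact Or.inr ((fill_star (Ctx.tryd Ctx.hole e) h).trans
        (Relation.ReflTransGen.single (Red.head (Head.tryDaimon e Tm.daimon))))
  | recd X Y D ih =>
    rcases ih with h | h
    · exact Or.inl ((fill_star (Ctx.recd X Y Ctx.hole) h).trans
        (Relation.ReflTransGen.single (Red.head (Head.recRaise X Y ε))))
    · exact Or.inr ((fill_star (Ctx.recd X Y Ctx.hole) h).trans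
        (Relation.ReflTransGen.single (Red.head (Head.recDaimon X Y))))
  | foldd X Y D ih =>
    rcases ih with h | h
    · exact Or.inl ((fill_star (Ctx.foldd X Y Ctx.hole) h).trans
        (Relation.ReflTransGen.single (Red.head (Head.foldRaise X Y ε))))
    · exact Or.inr ((fill_star (Ctx.foldd X Y Ctx.hole) h).trans
        (Relation.ReflTransGen.single (Red.head (Head.foldDaimon X Y))))

lemma foldl_daimon : ∀ (l : List ExnName) (C : Ctx) (M : Tm),
    RedStar (C.fill M) Tm.daimon →
    RedStar ((l.foldl Ctx.tryd C).fill M) Tm.daimon := by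
  intro l
  induction l with
  | nil => intro C M h; exact h
  | cons a l ih =>
    intro C M h
    apply ih (Ctx.tryd C a)
    show RedStar (Tm.tryc (C.fill M) a Tm.daimon) Tm.daimon
    exact (fill_star (Ctx.tryd Ctx.hole a) h).trans
      (Relation.ReflTransGen.single (Red.head (Head.tryDaimon a Tm.daimon)))

lemma foldl_raise : ∀ (l : List ExnName) (C : Ctx) (M : Tm) (e : ExnName),
    e ∈ l → RedStar (C.fill M) (Tm.raise e) →
    RedStar ((l.foldl Ctx.tryd C).fill M) Tm.daimon := by
  intro l
  induction l with
  | nil => intro _ _ _ h; cases h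
  | cons a l ih =>
    intro C M e he h
    by_cases hea : a = e
    · subst hea
      apply foldl_daimon l (Ctx.tryd C a)
      exact (fill_star (Ctx.tryd Ctx.hole a) h).trans
        (Relation.ReflTransGen.single (Red.head (Head.tryCatch a Tm.daimon)))
    · have he' : e ∈ l := by
        rcases List.mem_cons.mp he with h' | h'
        · exact absurd h'.symm hea
        · exact h'
      apply ih (Ctx.tryd C a) M e he'
      exact (fill_star (Ctx.tryd Ctx.hole a) h).trans
        (Relation.ReflTransGen.single (Red.head (Head.tryOther a e Tm.daimon hea)))

/-- Exceptions inhabit corrupted types: `raise ε ∈ ⟦{Δ}A⟧ρ` for `ε ∈ Δ`. -/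
theorem raise_mem_tmI_corrupt (A : Ty) (ρ : ℕ → Set Ctx)
    (hρ : ∀ i, (ρ i).Nonempty) (Δ : Finset ExnName) (ε : ExnName) (hε : ε ∈ Δ) :
    Tm.raise ε ∈ TmI (Ty.corrupt Δ A) ρ := by
  intro C hC
  rcases hC with ⟨D, _, rfl⟩
  unfold Perp
  rw [fill_comp]
  have hεl : ε ∈ Δ.sort (· ≤ ·) := (Finset.mem_sort _).mpr hε
  rcases ctx_raise D ε with h | h
  · exact foldl_raise _ Ctx.hole _ ε hεl h
  · exact foldl_daimon _ Ctx.hole _ h
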